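/- Let I be a strongly d-Golod monomial ideal in K[x_1,...,x_n] and J any monomial ideal. Then the saturation ∪_{t≥1} (I : J^t) of I with respect to J is strongly d-Golod. In particular, for any monomial ideal I and k ≥ 2, the saturation of I^k with respect to the maximal ideal is strongly d-Golod. -/

import Mathlib

/-- An ideal of `K[x_1,…,x_n]` is a monomial ideal if with each polynomial it contains
all the monomials in its support. -/
def IsMonomialIdeal {K : Type*} [Field K] {n : ℕ}
    (I : Ideal (MvPolynomial (Fin n) K)) : Prop :=
  ∀ f ∈ I, ∀ m ∈ f.support, MvPolynomial.monomial m (1 : K) ∈ I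

/-- A monomial ideal `L` of `K[x_1,…,x_n]` is strongly d-Golod if for all monomials
`u, v ∈ L` and all variables `x_i ∣ u`, `x_j ∣ v`, one has `uv/(x_i x_j) ∈ L`. -/
def StronglyDGolod {K : Type*} [Field K] {n : ℕ}
    (L : Ideal (MvPolynomial (Fin n) K)) : Prop :=
  ∀ a b : Fin n →₀ ℕ, MvPolynomial.monomial a (1 : K) ∈ L →
    MvPolynomial.monomial b (1 : K) ∈ L →
    ∀ i j : Fin n, a i ≠ 0 → b j ≠ 0 →
      MvPolynomial.monomial (a + b - Finsupp.single i 1 - Finsupp.single j 1) (1 : K) ∈ L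

namespace SDGAux

open MvPolynomial Finsupp Pointwise
open scoped Classical

variable {K : Type*} [Field K] {n : ℕ}

/-- The set of (exponents' worth of) monomials of an ideal. -/
def MSet (A : Ideal (MvPolynomial (Fin n) K)) : Set (MvPolynomial (Fin n) K) :=
  {f | ∃ a : Fin n →₀ ℕ, f = MvPolynomial.monomial a 1 ∧ f ∈ A}

lemma mset_monomials (A : Ideal (MvPolynomial (Fin n) K)) :
    ∀ f ∈ MSet A, ∃ a : Fin n →₀ ℕ, f = monomial a 1 :=
  fun _ hf => ⟨hf.choose, hf.choose_spec.1⟩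

lemma span_mset (A : Ideal (MvPolynomial (Fin n) K)) (hA : IsMonomialIdeal A) :
    A = Ideal.span (MSet A) := by
  apply le_antisymm
  · intro f hf
    rw [f.as_sum]
    refine Submodule.sum_mem _ fun m hm => ?_
    have h1 : monomial m (1:K) ∈ Ideal.span (MSet A) :=
      Ideal.subset_span ⟨m, rfl, hA f hf m hm⟩
    have : (monomial m (f.coeff m) : MvPolynomial (Fin n) K) = C (f.coeff m) * monomial m 1 := by
      rw [C_mul_monomial, mul_one]
    rw [this]
    exact Ideal.mul_mem_left _ _ h1
  · rw [Ideal.span_le]; rintro f ⟨a, rfl, hf⟩; exact hf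

/-- The span of a set of monomials is a monomial ideal. -/
lemma isMonomialIdeal_span (S : Set (MvPolynomial (Fin n) K))
    (hS : ∀ f ∈ S, ∃ a : Fin n →₀ ℕ, f = monomial a 1) :
    IsMonomialIdeal (Ideal.span S) := by
  intro f hf
  induction hf using Submodule.span_induction with
  | mem x hx =>
    obtain ⟨a, rfl⟩ := hS x hx
    intro m hm
    have := support_monomial_subset hm
    simp only [Finset.mem_singleton] at this
    subst this
    exact Ideal.subset_span hx
  | zero => simp
  | add x y hx hy ihx ihy =>
    intro m hm
    rcases Finset.mem_union.1 (Finsupp.support_add hm) with h | h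
    · exact ihx m h
    · exact ihy m h
  | smul r x hx ih =>
    intro m hm
    have hsub : (r • x).support ⊆ r.support + x.support := by
      rw [smul_eq_mul]; exact support_mul r x
    obtain ⟨m1, hm1, m2, hm2, rfl⟩ := Finset.mem_add.1 (hsub hm)
    have h2 := ih m2 hm2
    have : (monomial (m1 + m2) (1:K)) = monomial m1 1 * monomial m2 1 := by
      rw [monomial_mul, one_mul]
    rw [this]
    exact Ideal.mul_mem_left _ _ h2

/-- A monomial in the span of a set of monomials is divisible by one of them. -/
lemma div_of_mem_span (S : Set (MvPolynomial (Fin n) K))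
    (hS : ∀ f ∈ S, ∃ a : Fin n →₀ ℕ, f = monomial a 1)
    {c : Fin n →₀ ℕ} (hc : monomial c (1:K) ∈ Ideal.span S) :
    ∃ a : Fin n →₀ ℕ, monomial a (1:K) ∈ S ∧ a ≤ c := by
  have key : ∀ f, f ∈ Ideal.span S → ∀ m ∈ f.support,
      ∃ a : Fin n →₀ ℕ, monomial a (1:K) ∈ S ∧ a ≤ m := by
    intro f hf
    induction hf using Submodule.span_induction with
    | mem x hx =>
      obtain ⟨a, rfl⟩ := hS x hx
      intro m hm
      have := support_monomial_subset hm
      simp only [Finset.mem_singleton] at this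
      subst this
      exact ⟨m, hx, le_refl m⟩
    | zero => simp
    | add x y hx hy ihx ihy =>
      intro m hm
      rcases Finset.mem_union.1 (Finsupp.support_add hm) with h | h
      · exact ihx m h
      · exact ihy m h
    | smul r x hx ih =>
      intro m hm
      have hsub : (r • x).support ⊆ r.support + x.support := by
        rw [smul_eq_mul]; exact support_mul r x
      obtain ⟨m1, hm1, m2, hm2, rfl⟩ := Finset.mem_add.1 (hsub hm)
      obtain ⟨a, ha, hle⟩ := ih m2 hm2
      exact ⟨a, ha, hle.trans le_add_self⟩
  apply key _ hc c
  rw [support_monomial, if_neg (one_ne_zero' K)]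
  exact Finset.mem_singleton_self c

lemma isMonomialIdeal_mul {A B : Ideal (MvPolynomial (Fin n) K)} (hA : IsMonomialIdeal A)
    (hB : IsMonomialIdeal B) : IsMonomialIdeal (A * B) := by
  rw [span_mset A hA, span_mset B hB, Ideal.span_mul_span']
  apply isMonomialIdeal_span
  rintro f ⟨g, hg, h, hh, rfl⟩
  obtain ⟨a, rfl⟩ := mset_monomials A g hg
  obtain ⟨b, rfl⟩ := mset_monomials B h hh
  exact ⟨a + b, by simp [monomial_mul]⟩

lemma isMonomialIdeal_top : IsMonomialIdeal (⊤ : Ideal (MvPolynomial (Fin n) K)) := by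
  intro f _ m _; trivial

lemma isMonomialIdeal_pow {A : Ideal (MvPolynomial (Fin n) K)} (hA : IsMonomialIdeal A) (k : ℕ) :
    IsMonomialIdeal (A ^ k) := by
  induction k with
  | zero => simpa using isMonomialIdeal_top
  | succ k ih => rw [pow_succ]; exact isMonomialIdeal_mul ih hA

lemma sub_add_sub (a b : Fin n →₀ ℕ) (i j : Fin n) (hai : a i ≠ 0) (hbj : b j ≠ 0) :
    (a - Finsupp.single i 1) + (b - Finsupp.single j 1)
      = a + b - Finsupp.single i 1 - Finsupp.single j 1 := by
  have h1 := Nat.pos_of_ne_zero hai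
  have h2 := Nat.pos_of_ne_zero hbj
  ext x
  simp only [Finsupp.add_apply, Finsupp.tsub_apply, Finsupp.single_apply]
  rcases em (i = x) with hix | hix <;> rcases em (j = x) with hjx | hjx <;>
    simp_all <;> omega

lemma shift_sub (a b ρ π : Fin n →₀ ℕ) (i j : Fin n) (hai : a i ≠ 0) (hbj : b j ≠ 0) :
    (a + ρ) + (b + π) - Finsupp.single i 1 - Finsupp.single j 1
      = (a + b - Finsupp.single i 1 - Finsupp.single j 1) + (ρ + π) := by
  have h1 := Nat.pos_of_ne_zero hai
  have h2 := Nat.pos_of_ne_zero hbj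
  ext x
  simp only [Finsupp.add_apply, Finsupp.tsub_apply, Finsupp.single_apply]
  rcases em (i = x) with hix | hix <;> rcases em (j = x) with hjx | hjx <;>
    simp_all <;> omega

/-- If `u` is a monomial in `A^(k+1)` and `x_i ∣ u` then `u / x_i ∈ A^k`. -/
lemma pow_div {A : Ideal (MvPolynomial (Fin n) K)} (hA : IsMonomialIdeal A) :
    ∀ k : ℕ, ∀ (a : Fin n →₀ ℕ) (i : Fin n), monomial a (1:K) ∈ A ^ (k+1) → a i ≠ 0 →
      monomial (a - Finsupp.single i 1) (1:K) ∈ A ^ k := by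
  intro k
  induction k with
  | zero => intro a i _ _; simp
  | succ k ih =>
    intro a i ha hai
    have hS : ∀ f ∈ MSet (A ^ (k+1)) * MSet A, ∃ c : Fin n →₀ ℕ, f = monomial c 1 := by
      rintro f ⟨g, hg, h, hh, rfl⟩
      obtain ⟨c2, rfl⟩ := mset_monomials _ g hg
      obtain ⟨c1, rfl⟩ := mset_monomials _ h hh
      exact ⟨c2 + c1, by simp [monomial_mul]⟩
    have ha' : monomial a (1:K) ∈ Ideal.span (MSet (A ^ (k+1)) * MSet A) := by
      rw [← Ideal.span_mul_span', ← span_mset _ (isMonomialIdeal_pow hA (k+1)),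
        ← span_mset _ hA, ← pow_succ]
      exact ha
    obtain ⟨α, hαmem, hαle⟩ := div_of_mem_span _ hS ha'
    obtain ⟨g, hg, h, hh, hgh⟩ := hαmem
    obtain ⟨c2, rfl, hc2⟩ := hg
    obtain ⟨c1, rfl, hc1⟩ := hh
    have hgh2 : monomial c2 (1:K) * monomial c1 1 = monomial α 1 := hgh
    rw [monomial_mul, one_mul] at hgh2
    have hsum : c2 + c1 = α := monomial_left_injective (one_ne_zero' K) hgh2
    have hle : ∀ x, c2 x + c1 x ≤ a x := by
      intro x
      have := Finsupp.le_def.1 hαle x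
      have h2 := DFunLike.congr_fun hsum x
      simp only [Finsupp.add_apply] at h2
      omega
    by_cases hc2i : c2 i = 0
    · have hle2 : c2 ≤ a - Finsupp.single i 1 := by
        rw [Finsupp.le_def]
        intro x
        have hx := hle x
        have hpos := Nat.pos_of_ne_zero hai
        simp only [Finsupp.tsub_apply, Finsupp.single_apply]
        by_cases hix : i = x
        · subst hix; rw [if_pos rfl]; omega
        · rw [if_neg hix]; omega
      have : monomial (a - Finsupp.single i 1) (1:K)
          = monomial c2 1 * monomial ((a - Finsupp.single i 1) - c2) 1 := by
        rw [monomial_mul, one_mul, add_tsub_cancel_of_le hle2]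
      rw [this]
      exact Ideal.mul_mem_right _ _ hc2
    · have h2 := ih c2 i hc2 hc2i
      have hle2 : (c2 - Finsupp.single i 1) + c1 ≤ a - Finsupp.single i 1 := by
        rw [Finsupp.le_def]
        intro x
        have hx := hle x
        have hpos := Nat.pos_of_ne_zero hai
        have hpos2 := Nat.pos_of_ne_zero hc2i
        simp only [Finsupp.add_apply, Finsupp.tsub_apply, Finsupp.single_apply]
        by_cases hix : i = x
        · subst hix; rw [if_pos rfl]; omega
        · rw [if_neg hix]; omega
      have heq : monomial (a - Finsupp.single i 1) (1:K)
          = (monomial (c2 - Finsupp.single i 1) 1 * monomial c1 1)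
            * monomial ((a - Finsupp.single i 1) - ((c2 - Finsupp.single i 1) + c1)) 1 := by
        rw [monomial_mul, monomial_mul, one_mul, one_mul, add_tsub_cancel_of_le hle2]
      rw [heq, pow_succ]
      exact Ideal.mul_mem_right _ _ (Ideal.mul_mem_mul h2 hc1)

/-- For `k ≥ 2`, the power `A^k` of a monomial ideal is strongly d-Golod. -/
lemma pow_golod {A : Ideal (MvPolynomial (Fin n) K)} (hA : IsMonomialIdeal A) (k : ℕ)
    (hk : 2 ≤ k) : StronglyDGolod (A ^ k) := by
  intro a b ha hb i j hai hbj
  have hk1 : k - 1 + 1 = k := by omega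
  rw [← hk1] at ha hb
  have h1 := pow_div hA (k-1) a i ha hai
  have h2 := pow_div hA (k-1) b j hb hbj
  have h3 : monomial (a - Finsupp.single i 1) (1:K) * monomial (b - Finsupp.single j 1) 1
      ∈ A ^ ((k-1) + (k-1)) := by
    rw [pow_add]
    exact Ideal.mul_mem_mul h1 h2
  have h4 := Ideal.pow_le_pow_right (I := A) (show k ≤ (k-1) + (k-1) by omega) h3
  rw [monomial_mul, one_mul, sub_add_sub a b i j hai hbj] at h4
  exact h4

/-- Membership in the saturation. -/
lemma mem_sat {I J : Ideal (MvPolynomial (Fin n) K)} {x : MvPolynomial (Fin n) K} :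
    x ∈ (⨆ t ∈ Set.Ici 1, I.colon ((J ^ t : Ideal (MvPolynomial (Fin n) K)) : Set (MvPolynomial (Fin n) K))) ↔ ∃ t, 1 ≤ t ∧ x ∈ I.colon ((J ^ t : Ideal (MvPolynomial (Fin n) K)) : Set (MvPolynomial (Fin n) K)) := by
  constructor
  · intro hx
    have hdir : Directed (· ≤ ·)
        (fun t : ℕ => ⨆ (_ : t ∈ Set.Ici 1), I.colon ((J ^ t : Ideal (MvPolynomial (Fin n) K)) : Set (MvPolynomial (Fin n) K))) := by
      apply Monotone.directed_le
      intro s t hst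
      refine iSup_le fun hs => ?_
      refine le_trans ?_ (le_iSup _ (Set.mem_Ici.2 ((Set.mem_Ici.1 hs).trans hst)))
      exact Submodule.colon_mono le_rfl (SetLike.coe_subset_coe.2 (Ideal.pow_le_pow_right hst))
    obtain ⟨t, ht⟩ := (Submodule.mem_iSup_of_directed _ hdir).1 hx
    by_cases h1 : (1:ℕ) ≤ t
    · rw [iSup_pos (Set.mem_Ici.2 h1)] at ht
      exact ⟨t, h1, ht⟩
    · rw [iSup_neg (by simpa using h1)] at ht
      rw [Submodule.mem_bot] at ht
      subst ht
      exact ⟨1, le_rfl, Submodule.zero_mem _⟩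
  · rintro ⟨t, h1, ht⟩
    exact le_iSup₂ (f := fun (t : ℕ) (_ : t ∈ Set.Ici 1) => I.colon ((J ^ t : Ideal (MvPolynomial (Fin n) K)) : Set (MvPolynomial (Fin n) K))) t
      (Set.mem_Ici.2 h1) ht

/-- Main lemma: the saturation of a strongly d-Golod monomial ideal with respect to a
monomial ideal is strongly d-Golod. -/
lemma sat_golod (I J : Ideal (MvPolynomial (Fin n) K)) (hJ : IsMonomialIdeal J)
    (hIG : StronglyDGolod I) :
    StronglyDGolod (⨆ t ∈ Set.Ici 1, I.colon ((J ^ t : Ideal (MvPolynomial (Fin n) K)) : Set (MvPolynomial (Fin n) K))) := by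
  intro a b ha hb i j hai hbj
  rw [mem_sat] at ha hb ⊢
  obtain ⟨s, hs1, hs⟩ := ha
  obtain ⟨t, ht1, ht⟩ := hb
  set s' := max s t with hs'def
  have hu : monomial a (1:K) ∈ I.colon ((J ^ s' : Ideal (MvPolynomial (Fin n) K)) : Set (MvPolynomial (Fin n) K)) :=
    Submodule.colon_mono le_rfl (SetLike.coe_subset_coe.2 (Ideal.pow_le_pow_right (le_max_left s t))) hs
  have hv : monomial b (1:K) ∈ I.colon ((J ^ s' : Ideal (MvPolynomial (Fin n) K)) : Set (MvPolynomial (Fin n) K)) :=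
    Submodule.colon_mono le_rfl (SetLike.coe_subset_coe.2 (Ideal.pow_le_pow_right (le_max_right s t))) ht
  refine ⟨2 * s', by omega, ?_⟩
  rw [Submodule.mem_colon]
  have hpowspan : (J ^ (2 * s') : Ideal (MvPolynomial (Fin n) K))
      = Ideal.span (MSet (J ^ s') * MSet (J ^ s')) := by
    rw [← Ideal.span_mul_span', ← span_mset _ (isMonomialIdeal_pow hJ s'), ← pow_add, two_mul]
  intro p hp
  rw [hpowspan] at hp
  induction hp using Submodule.span_induction with
  | mem x hx =>
    obtain ⟨g, hg, h, hh, rfl⟩ := hx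
    obtain ⟨ρ, rfl, hgJ⟩ := hg
    obtain ⟨π, rfl, hhJ⟩ := hh
    have hu' : monomial (a + ρ) (1:K) ∈ I := by
      have := Submodule.mem_colon.1 hu _ hgJ
      rwa [smul_eq_mul, monomial_mul, mul_one] at this
    have hv' : monomial (b + π) (1:K) ∈ I := by
      have := Submodule.mem_colon.1 hv _ hhJ
      rwa [smul_eq_mul, monomial_mul, mul_one] at this
    have hai' : (a + ρ) i ≠ 0 := by
      simp only [Finsupp.add_apply]
      omega
    have hbj' : (b + π) j ≠ 0 := by
      simp only [Finsupp.add_apply]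
      omega
    have hmain := hIG (a + ρ) (b + π) hu' hv' i j hai' hbj'
    rw [shift_sub a b ρ π i j hai hbj] at hmain
    have heq : monomial (a + b - Finsupp.single i 1 - Finsupp.single j 1) (1:K)
        • (monomial ρ 1 * monomial π 1)
        = monomial ((a + b - Finsupp.single i 1 - Finsupp.single j 1) + (ρ + π)) (1:K) := by
      simp [smul_eq_mul, monomial_mul, add_assoc]
    rw [heq]
    exact hmain
  | zero => rw [smul_zero]; exact Submodule.zero_mem _
  | add x y hx hy ihx ihy => rw [smul_add]; exact Submodule.add_mem _ ihx ihy
  | smul r x hx ih =>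
    rw [smul_comm]
    exact Submodule.smul_mem _ _ ih

end SDGAux

/-- If `I` is a strongly d-Golod monomial ideal and `J` any monomial ideal, then the
saturation `⋃_{t≥1} (I : J^t)` of `I` with respect to `J` is strongly d-Golod.
In particular, for any monomial ideal `I` and `k ≥ 2`, the saturation of `I^k` with
respect to the maximal ideal `(x_1,…,x_n)` is strongly d-Golod. -/
theorem stronglyDGolod_saturation {K : Type*} [Field K] {n : ℕ}
    (I J : Ideal (MvPolynomial (Fin n) K))
    (hI : IsMonomialIdeal I) (hJ : IsMonomialIdeal J)
    (hIG : StronglyDGolod I) :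
    StronglyDGolod (⨆ t ∈ Set.Ici 1, I.colon ((J ^ t : Ideal (MvPolynomial (Fin n) K)) : Set (MvPolynomial (Fin n) K))) ∧
    ∀ I' : Ideal (MvPolynomial (Fin n) K), IsMonomialIdeal I' → ∀ k : ℕ, 2 ≤ k →
      StronglyDGolod (⨆ t ∈ Set.Ici 1,
        (I' ^ k).colon (((Ideal.span (Set.range (MvPolynomial.X : Fin n → MvPolynomial (Fin n) K))) ^ t : Ideal (MvPolynomial (Fin n) K)) : Set (MvPolynomial (Fin n) K))) := by
  constructor
  · exact SDGAux.sat_golod I J hJ hIG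
  · intro I' hI' k hk
    apply SDGAux.sat_golod
    · apply SDGAux.isMonomialIdeal_span
      rintro f ⟨i, rfl⟩
      exact ⟨Finsupp.single i 1, rfl⟩
    · exact SDGAux.pow_golod hI' k hk
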